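/- arXiv:2503.00942 — 2 statements merged into one kernel-verified Lean document; each statement's English description precedes it below -/
import Mathlib

section
/- Let m, n be positive integers, B an m×n real matrix with full column rank, Q ∈ ℝ^m, P* = (BᵀB)⁻¹BᵀQ, r* = BP* − Q, and MSEuw = (1/m)∑_{i=1}^m (r*_i)². Assume the entries of r* do not all have the same absolute value. Then there exist δ > 0, a neighborhood U of the point (P*, 0, (1/m, …, 1/m)) in ℝⁿ × ℝ × ℝ^m, and continuously differentiable functions E ↦ (P(E), μ(E), w(E)) defined on the interval (MSEuw − δ, MSEuw] with values in U, such that F(P(E), μ(E), w(E); E) = 0 for every E in the interval, (P(MSEuw), μ(MSEuw), w(MSEuw)) = (P*, 0, (1/m, …, 1/m)), and for each such E the triple (P(E), μ(E), w(E)) is the unique zero of F(·, ·, ·; E) in U. -/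
open Matrix Finset

set_option maxHeartbeats 1000000

/-- The map `F(P, μ, w; E) = (F1, F2, F3)` of the maximum-entropy weighted
least-squares system, with residual `r = BP − Q`:
`F1 = Bᵀ diag(w) r`, `F2 = ∑ i, e^{−μ r_i²} r_i² − E ∑ i, e^{−μ r_i²}`,
`F3_k = w_k − e^{−μ r_k²}/∑ i, e^{−μ r_i²}`. -/
noncomputable def Fmap (m n : ℕ) (B : Matrix (Fin m) (Fin n) ℝ) (Q : Fin m → ℝ)
    (E : ℝ) (P : Fin n → ℝ) (μ : ℝ) (w : Fin m → ℝ) :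
    (Fin n → ℝ) × ℝ × (Fin m → ℝ) :=
  let r := B.mulVec P - Q
  (Bᵀ.mulVec ((Matrix.diagonal w).mulVec r),
   ∑ i : Fin m, Real.exp (-μ * (r i) ^ 2) * (r i) ^ 2
     - E * ∑ i : Fin m, Real.exp (-μ * (r i) ^ 2),
   fun k => w k - Real.exp (-μ * (r k) ^ 2) / ∑ i : Fin m, Real.exp (-μ * (r i) ^ 2))

abbrev Xsp (m n : ℕ) := (Fin n → ℝ) × ℝ × (Fin m → ℝ)
abbrev Ysp (m n : ℕ) := ℝ × Xsp m n

noncomputable section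

def cE (m n : ℕ) : Ysp m n →L[ℝ] ℝ := ContinuousLinearMap.fst ℝ ℝ (Xsp m n)
def cP (m n : ℕ) : Ysp m n →L[ℝ] (Fin n → ℝ) :=
  (ContinuousLinearMap.fst ℝ (Fin n → ℝ) (ℝ × (Fin m → ℝ))).comp
    (ContinuousLinearMap.snd ℝ ℝ (Xsp m n))
def cmu (m n : ℕ) : Ysp m n →L[ℝ] ℝ :=
  (ContinuousLinearMap.fst ℝ ℝ (Fin m → ℝ)).comp
    ((ContinuousLinearMap.snd ℝ (Fin n → ℝ) (ℝ × (Fin m → ℝ))).comp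
      (ContinuousLinearMap.snd ℝ ℝ (Xsp m n)))
def cwv (m n : ℕ) : Ysp m n →L[ℝ] (Fin m → ℝ) :=
  (ContinuousLinearMap.snd ℝ ℝ (Fin m → ℝ)).comp
    ((ContinuousLinearMap.snd ℝ (Fin n → ℝ) (ℝ × (Fin m → ℝ))).comp
      (ContinuousLinearMap.snd ℝ ℝ (Xsp m n)))
def cw (m n : ℕ) (k : Fin m) : Ysp m n →L[ℝ] ℝ :=
  (ContinuousLinearMap.proj k).comp (cwv m n)
def cr (m n : ℕ) (B : Matrix (Fin m) (Fin n) ℝ) (i : Fin m) : Ysp m n →L[ℝ] ℝ :=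
  (ContinuousLinearMap.proj i).comp
    ((Matrix.mulVecLin B).toContinuousLinearMap.comp (cP m n))

@[simp] lemma cE_apply (m n : ℕ) (v : Ysp m n) : cE m n v = v.1 := rfl
@[simp] lemma cP_apply (m n : ℕ) (v : Ysp m n) : cP m n v = v.2.1 := rfl
@[simp] lemma cmu_apply (m n : ℕ) (v : Ysp m n) : cmu m n v = v.2.2.1 := rfl
@[simp] lemma cw_apply (m n : ℕ) (k : Fin m) (v : Ysp m n) : cw m n k v = v.2.2.2 k := rfl
@[simp] lemma cr_apply (m n : ℕ) (B : Matrix (Fin m) (Fin n) ℝ) (i : Fin m) (v : Ysp m n) :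
    cr m n B i v = B.mulVec v.2.1 i := rfl

/-- Explicit form of the extended map `q ↦ (q.1, Fmap … )`. -/
def Gexp (m n : ℕ) (B : Matrix (Fin m) (Fin n) ℝ) (Q : Fin m → ℝ) (q : Ysp m n) : Ysp m n :=
  (q.1,
   (fun j => ∑ i : Fin m, B i j * (q.2.2.2 i * (B.mulVec q.2.1 i - Q i)),
    ∑ i : Fin m, Real.exp (-q.2.2.1 * (B.mulVec q.2.1 i - Q i) ^ 2) * (B.mulVec q.2.1 i - Q i) ^ 2
      - q.1 * ∑ i : Fin m, Real.exp (-q.2.2.1 * (B.mulVec q.2.1 i - Q i) ^ 2),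
    fun k => q.2.2.2 k - Real.exp (-q.2.2.1 * (B.mulVec q.2.1 k - Q k) ^ 2)
      / ∑ i : Fin m, Real.exp (-q.2.2.1 * (B.mulVec q.2.1 i - Q i) ^ 2)))

lemma Gexp_eq (m n : ℕ) (B : Matrix (Fin m) (Fin n) ℝ) (Q : Fin m → ℝ) (q : Ysp m n) :
    Gexp m n B Q q = (q.1, Fmap m n B Q q.1 q.2.1 q.2.2.1 q.2.2.2) := by
  have hd : (Matrix.diagonal q.2.2.2).mulVec (B.mulVec q.2.1 - Q)
      = fun i => q.2.2.2 i * (B.mulVec q.2.1 i - Q i) := by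
    funext i; rw [Matrix.mulVec_diagonal]; simp
  simp only [Gexp, Fmap, hd, Prod.mk.injEq, true_and]
  refine ⟨?_, by simp, ?_⟩
  · funext j
    simp [Matrix.mulVec, dotProduct, transpose_apply, mul_comm]
  · funext k
    simp

/-- The derivative of `Gexp` at the base point, as an explicit continuous linear map. -/
def Dclm (m n : ℕ) (B : Matrix (Fin m) (Fin n) ℝ) (rstar : Fin m → ℝ) (MSEuw c : ℝ) :
    Ysp m n →L[ℝ] Ysp m n :=
  (cE m n).prod
    ((ContinuousLinearMap.pi fun j =>
        ∑ i : Fin m, B i j • ((1/(m:ℝ)) • cr m n B i + rstar i • cw m n i)).prod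
      (((-(m:ℝ)) • cE m n + (-c) • cmu m n).prod
        (ContinuousLinearMap.pi fun k =>
          cw m n k + ((rstar k ^ 2 - MSEuw)/(m:ℝ)) • cmu m n)))

lemma smooth_Gexp (m n : ℕ) (hm : 0 < m) (B : Matrix (Fin m) (Fin n) ℝ) (Q : Fin m → ℝ) :
    ContDiff ℝ 1 (Gexp m n B Q) := by
  have : Nonempty (Fin m) := Fin.pos_iff_nonempty.mp hm
  have hri : ∀ i : Fin m, ContDiff ℝ 1 (fun q : Ysp m n => B.mulVec q.2.1 i - Q i) :=
    fun i => ((cr m n B i).contDiff).sub contDiff_const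
  have hμ : ContDiff ℝ 1 (fun q : Ysp m n => q.2.2.1) := (cmu m n).contDiff
  have hexp : ∀ i : Fin m,
      ContDiff ℝ 1 (fun q : Ysp m n => Real.exp (-q.2.2.1 * (B.mulVec q.2.1 i - Q i) ^ 2)) :=
    fun i => Real.contDiff_exp.comp ((hμ.neg).mul ((hri i).pow 2))
  have hS : ContDiff ℝ 1
      (fun q : Ysp m n => ∑ i : Fin m, Real.exp (-q.2.2.1 * (B.mulVec q.2.1 i - Q i) ^ 2)) :=
    ContDiff.sum fun i _ => hexp i
  have hSne : ∀ q : Ysp m n,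
      (∑ i : Fin m, Real.exp (-q.2.2.1 * (B.mulVec q.2.1 i - Q i) ^ 2)) ≠ 0 := by
    intro q
    have : 0 < ∑ i : Fin m, Real.exp (-q.2.2.1 * (B.mulVec q.2.1 i - Q i) ^ 2) :=
      Finset.sum_pos (fun i _ => Real.exp_pos _) univ_nonempty
    exact ne_of_gt this
  refine ContDiff.prodMk contDiff_fst (ContDiff.prodMk ?_ (ContDiff.prodMk ?_ ?_))
  · exact contDiff_pi.mpr fun j => ContDiff.sum fun i _ =>
      contDiff_const.mul ((((cw m n i).contDiff)).mul (hri i))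
  · exact (ContDiff.sum fun i _ => (hexp i).mul ((hri i).pow 2)).sub
      (contDiff_fst.mul hS)
  · exact contDiff_pi.mpr fun k => ((cw m n k).contDiff).sub ((hexp k).div hS hSne)

lemma hasFDerivAt_Gexp (m n : ℕ) (hm : 0 < m) (B : Matrix (Fin m) (Fin n) ℝ) (Q : Fin m → ℝ)
    (MSEuw : ℝ) (Pstar : Fin n → ℝ) (rstar : Fin m → ℝ)
    (hr : rstar = B.mulVec Pstar - Q)
    (hM : MSEuw = (1 / (m : ℝ)) * ∑ i : Fin m, (rstar i) ^ 2)
    (hBtr : Bᵀ.mulVec rstar = 0) :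
    HasFDerivAt (Gexp m n B Q)
      (Dclm m n B rstar MSEuw ((∑ i : Fin m, rstar i ^ 4) - MSEuw * ∑ i : Fin m, rstar i ^ 2))
      ((MSEuw, (Pstar, 0, fun _ => 1/(m:ℝ))) : Ysp m n) := by
  have hm' : (m:ℝ) ≠ 0 := Nat.cast_ne_zero.mpr hm.ne'
  have hsum2 : ∑ i : Fin m, rstar i ^ 2 = (m:ℝ) * MSEuw := by rw [hM]; field_simp
  set a : Ysp m n := (MSEuw, (Pstar, 0, fun _ => 1/(m:ℝ))) with ha
  have hra : ∀ i, B.mulVec a.2.1 i - Q i = rstar i := by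
    intro i; rw [hr]; simp [ha]
  have ha0 : a.2.2.1 = (0:ℝ) := rfl
  have ha2 : ∀ i : Fin m, a.2.2.2 i = 1/(m:ℝ) := fun _ => rfl
  have hdot : ∀ dP : Fin n → ℝ, ∑ i : Fin m, rstar i * B.mulVec dP i = 0 := by
    intro dP
    have h1 : rstar ⬝ᵥ B.mulVec dP = Bᵀ.mulVec rstar ⬝ᵥ dP := by
      rw [dotProduct_mulVec, Matrix.mulVec_transpose]
    have h2 : rstar ⬝ᵥ B.mulVec dP = ∑ i : Fin m, rstar i * B.mulVec dP i := rfl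
    rw [← h2, h1, hBtr]
    simp [dotProduct]
  -- basic derivatives
  have hE : HasFDerivAt (fun q : Ysp m n => q.1) (cE m n) a := (cE m n).hasFDerivAt
  have hμ : HasFDerivAt (fun q : Ysp m n => q.2.2.1) (cmu m n) a := (cmu m n).hasFDerivAt
  have hw : ∀ k : Fin m, HasFDerivAt (fun q : Ysp m n => q.2.2.2 k) (cw m n k) a :=
    fun k => (cw m n k).hasFDerivAt
  have hri : ∀ i : Fin m,
      HasFDerivAt (fun q : Ysp m n => B.mulVec q.2.1 i - Q i) (cr m n B i) a :=
    fun i => ((cr m n B i).hasFDerivAt).sub_const (Q i)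
  have hsq : ∀ i : Fin m,
      HasFDerivAt (fun q : Ysp m n => (B.mulVec q.2.1 i - Q i) ^ 2)
        ((2 * rstar i) • cr m n B i) a := by
    intro i
    have h := (hri i).mul (hri i)
    simp only [← pow_two] at h
    refine h.congr_fderiv (ContinuousLinearMap.ext fun v => ?_)
    simp [hra i]
    ring
  have hg : ∀ i : Fin m,
      HasFDerivAt (fun q : Ysp m n => -q.2.2.1 * (B.mulVec q.2.1 i - Q i) ^ 2)
        ((-(rstar i ^ 2)) • cmu m n) a := by
    intro i
    have h := (hμ.neg).mul (hsq i)
    refine h.congr_fderiv (ContinuousLinearMap.ext fun v => ?_)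
    simp [hra i, ha0]
  have hexp : ∀ i : Fin m,
      HasFDerivAt (fun q : Ysp m n => Real.exp (-q.2.2.1 * (B.mulVec q.2.1 i - Q i) ^ 2))
        ((-(rstar i ^ 2)) • cmu m n) a := by
    intro i
    have h := (hg i).exp
    refine h.congr_fderiv (ContinuousLinearMap.ext fun v => ?_)
    simp [hra i, ha0]
  have hS : HasFDerivAt
      (fun q : Ysp m n => ∑ i : Fin m, Real.exp (-q.2.2.1 * (B.mulVec q.2.1 i - Q i) ^ 2))
      (∑ i : Fin m, (-(rstar i ^ 2)) • cmu m n) a :=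
    HasFDerivAt.fun_sum fun i _ => hexp i
  have hSa : (∑ i : Fin m, Real.exp (-a.2.2.1 * (B.mulVec a.2.1 i - Q i) ^ 2)) = (m:ℝ) := by
    have : ∀ i, Real.exp (-a.2.2.1 * (B.mulVec a.2.1 i - Q i) ^ 2) = 1 := by
      intro i; simp [ha]
    simp [this, ha0]
  -- F1 component
  have hF1 : HasFDerivAt
      (fun q : Ysp m n => (fun j => ∑ i : Fin m, B i j * (q.2.2.2 i * (B.mulVec q.2.1 i - Q i))))
      (ContinuousLinearMap.pi fun j =>
        ∑ i : Fin m, B i j • ((1/(m:ℝ)) • cr m n B i + rstar i • cw m n i)) a := by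
    apply hasFDerivAt_pi.mpr
    intro j
    have hterm : ∀ i : Fin m,
        HasFDerivAt (fun q : Ysp m n => B i j * (q.2.2.2 i * (B.mulVec q.2.1 i - Q i)))
          (B i j • ((1/(m:ℝ)) • cr m n B i + rstar i • cw m n i)) a := by
      intro i
      have h := ((hw i).mul (hri i)).const_mul (B i j)
      refine h.congr_fderiv (ContinuousLinearMap.ext fun v => ?_)
      simp [hra i, ha2]
    exact HasFDerivAt.fun_sum fun i _ => hterm i
  -- F2 component
  have hF2 : HasFDerivAt
      (fun q : Ysp m n =>
        ∑ i : Fin m, Real.exp (-q.2.2.1 * (B.mulVec q.2.1 i - Q i) ^ 2) * (B.mulVec q.2.1 i - Q i) ^ 2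
          - q.1 * ∑ i : Fin m, Real.exp (-q.2.2.1 * (B.mulVec q.2.1 i - Q i) ^ 2))
      (((-(m:ℝ)) • cE m n +
        (-((∑ i : Fin m, rstar i ^ 4) - MSEuw * ∑ i : Fin m, rstar i ^ 2)) • cmu m n)) a := by
    have hsum1 := HasFDerivAt.fun_sum (fun i (_ : i ∈ (univ : Finset (Fin m))) => (hexp i).mul (hsq i))
    have h := hsum1.sub (hE.mul hS)
    refine h.congr_fderiv (ContinuousLinearMap.ext fun v => ?_)
    simp [hra, hSa, ha0]
    rw [Finset.sum_add_distrib]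
    have e1 : ∑ x : Fin m, 2 * rstar x * (B *ᵥ v.2.1) x = 0 := by
      have h0 := hdot v.2.1
      have : ∑ x : Fin m, 2 * rstar x * (B *ᵥ v.2.1) x
          = 2 * ∑ x : Fin m, rstar x * (B *ᵥ v.2.1) x := by
        rw [Finset.mul_sum]; exact Finset.sum_congr rfl fun x _ => by ring
      rw [this, h0, mul_zero]
    have e2 : ∑ x : Fin m, -(rstar x ^ 2 * (rstar x ^ 2 * v.2.2.1))
        = (∑ x : Fin m, -rstar x ^ 4) * v.2.2.1 := by
      rw [Finset.sum_mul]; exact Finset.sum_congr rfl fun x _ => by ring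
    have e3 : ∑ x : Fin m, rstar x ^ 2 * v.2.2.1 = (∑ x : Fin m, rstar x ^ 2) * v.2.2.1 := by
      rw [Finset.sum_mul]
    rw [e1, e2, e3, Finset.sum_neg_distrib]
    ring
  -- F3 component
  have hSne : (∑ i : Fin m, Real.exp (-a.2.2.1 * (B.mulVec a.2.1 i - Q i) ^ 2)) ≠ 0 := by
    rw [hSa]; exact hm'
  have hinv := (hasDerivAt_inv hSne).comp_hasFDerivAt a hS
  have hF3 : HasFDerivAt
      (fun q : Ysp m n => (fun k => q.2.2.2 k - Real.exp (-q.2.2.1 * (B.mulVec q.2.1 k - Q k) ^ 2)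
        / ∑ i : Fin m, Real.exp (-q.2.2.1 * (B.mulVec q.2.1 i - Q i) ^ 2)))
      (ContinuousLinearMap.pi fun k =>
        cw m n k + ((rstar k ^ 2 - MSEuw)/(m:ℝ)) • cmu m n) a := by
    apply hasFDerivAt_pi.mpr
    intro k
    simp only [div_eq_mul_inv]
    have h := (hw k).sub ((hexp k).mul hinv)
    refine h.congr_fderiv (ContinuousLinearMap.ext fun v => ?_)
    have ha0 : a.2.2.1 = (0:ℝ) := rfl
    simp only [Function.comp_apply, ContinuousLinearMap.sub_apply, ContinuousLinearMap.add_apply,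
      ContinuousLinearMap.smul_apply, ContinuousLinearMap.coe_sum', Finset.sum_apply,
      cw_apply, cmu_apply, smul_eq_mul, hSa, ha0]
    simp only [neg_zero, zero_mul, Real.exp_zero, Finset.sum_const, Finset.card_univ,
      Fintype.card_fin, nsmul_eq_mul, mul_one]
    rw [← Finset.sum_mul, Finset.sum_neg_distrib, hsum2]
    have hmsq : ((m:ℝ) ^ 2)⁻¹ = ((m:ℝ))⁻¹ * ((m:ℝ))⁻¹ := by rw [sq, mul_inv]
    have hinvm : ((m:ℝ))⁻¹ * (m:ℝ) = 1 := inv_mul_cancel₀ hm'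
    rw [hmsq]
    linear_combination (-(MSEuw) * v.2.2.1 * ((m:ℝ))⁻¹) * hinvm
  have hG := hE.prodMk (hF1.prodMk (hF2.prodMk hF3))
  exact hG

lemma Dclm_injective (m n : ℕ) (hm : 0 < m) (B : Matrix (Fin m) (Fin n) ℝ)
    (hB : IsUnit (Bᵀ * B).det) (rstar : Fin m → ℝ) (MSEuw c : ℝ) (hc : c ≠ 0) :
    Function.Injective (Dclm m n B rstar MSEuw c) := by
  have hm' : (m:ℝ) ≠ 0 := Nat.cast_ne_zero.mpr hm.ne'
  rw [injective_iff_map_eq_zero]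
  rintro ⟨dE, dP, dμ, dw⟩ hv
  have h1 : (Dclm m n B rstar MSEuw c (dE, dP, dμ, dw)).1 = 0 := by rw [hv]; rfl
  have h2 : (Dclm m n B rstar MSEuw c (dE, dP, dμ, dw)).2.1 = 0 := by rw [hv]; rfl
  have h3 : (Dclm m n B rstar MSEuw c (dE, dP, dμ, dw)).2.2.1 = 0 := by rw [hv]; rfl
  have h4 : (Dclm m n B rstar MSEuw c (dE, dP, dμ, dw)).2.2.2 = 0 := by rw [hv]; rfl
  simp only [Dclm, ContinuousLinearMap.prod_apply, ContinuousLinearMap.pi_apply,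
    ContinuousLinearMap.add_apply, ContinuousLinearMap.smul_apply,
    ContinuousLinearMap.coe_sum', Finset.sum_apply, cE_apply, cmu_apply, cw_apply, cr_apply,
    smul_eq_mul] at h1 h3
  have hdE : dE = 0 := h1
  have hdμ : dμ = 0 := by
    have : -(m:ℝ) * dE + -c * dμ = 0 := h3
    rw [hdE, mul_zero, zero_add] at this
    exact (mul_eq_zero.mp this).resolve_left (neg_ne_zero.mpr hc)
  have hdw : dw = 0 := by
    funext k
    have h4k := congrFun h4 k
    simp only [Dclm, ContinuousLinearMap.prod_apply, ContinuousLinearMap.pi_apply,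
      ContinuousLinearMap.add_apply, ContinuousLinearMap.smul_apply, cmu_apply, cw_apply,
      smul_eq_mul, Pi.zero_apply] at h4k
    rw [hdμ, mul_zero, add_zero] at h4k
    exact h4k
  have hdP : dP = 0 := by
    have hP2 : ∀ j, ((Bᵀ * B).mulVec dP) j = 0 := by
      intro j
      have hj := congrFun h2 j
      simp only [Dclm, ContinuousLinearMap.prod_apply, ContinuousLinearMap.pi_apply,
        ContinuousLinearMap.add_apply, ContinuousLinearMap.smul_apply,
        ContinuousLinearMap.coe_sum', Finset.sum_apply, cr_apply, cw_apply,
        smul_eq_mul, Pi.zero_apply, hdw, mul_zero, add_zero] at hj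
      have : ∑ i : Fin m, B i j * (1 / (m:ℝ) * B.mulVec dP i)
          = (1/(m:ℝ)) * ∑ i : Fin m, B i j * B.mulVec dP i := by
        rw [Finset.mul_sum]; exact Finset.sum_congr rfl fun i _ => by ring
      rw [this] at hj
      have h0 : ∑ i : Fin m, B i j * B.mulVec dP i = 0 := by
        rcases mul_eq_zero.mp hj with h | h
        · exact absurd h (by simpa using hm')
        · exact h
      have : ((Bᵀ * B).mulVec dP) j = ∑ i : Fin m, B i j * B.mulVec dP i := by
        rw [← Matrix.mulVec_mulVec]
        simp [Matrix.mulVec, dotProduct, transpose_apply]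
      rw [this, h0]
    have : (Bᵀ * B).mulVec dP = 0 := funext hP2
    have h1' : ((Bᵀ * B)⁻¹).mulVec ((Bᵀ * B).mulVec dP) = 0 := by rw [this, Matrix.mulVec_zero]
    rwa [Matrix.mulVec_mulVec, Matrix.nonsing_inv_mul _ hB, Matrix.one_mulVec] at h1'
  simp [hdE, hdμ, hdw, hdP]


end

/-- Local existence, uniqueness and smooth dependence on the
parameter `E = MSE` of the solution of the maximum-entropy system near the
ordinary least-squares point `(P*, 0, (1/m,…,1/m))`, for `E` in a left
neighborhood `(MSEuw − δ, MSEuw]` of `MSEuw`. -/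
theorem stmt_0 (m n : ℕ) (hm : 0 < m) (hn : 0 < n)
    (B : Matrix (Fin m) (Fin n) ℝ) (Q : Fin m → ℝ)
    (hB : IsUnit (Bᵀ * B).det)
    (Pstar : Fin n → ℝ) (hP : Pstar = ((Bᵀ * B)⁻¹ * Bᵀ).mulVec Q)
    (rstar : Fin m → ℝ) (hr : rstar = B.mulVec Pstar - Q)
    (MSEuw : ℝ) (hM : MSEuw = (1 / (m : ℝ)) * ∑ i : Fin m, (rstar i) ^ 2)
    (hres : ¬ ∀ i j : Fin m, |rstar i| = |rstar j|) :
    ∃ δ > (0 : ℝ),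
      ∃ U ∈ nhds ((Pstar, 0, fun _ => 1 / (m : ℝ)) :
          (Fin n → ℝ) × ℝ × (Fin m → ℝ)),
        ∃ (Pf : ℝ → Fin n → ℝ) (μf : ℝ → ℝ) (wf : ℝ → Fin m → ℝ),
          ContDiffOn ℝ 1 (fun E => (Pf E, μf E, wf E)) (Set.Ioc (MSEuw - δ) MSEuw) ∧
          (∀ E ∈ Set.Ioc (MSEuw - δ) MSEuw,
            (Pf E, μf E, wf E) ∈ U ∧ Fmap m n B Q E (Pf E) (μf E) (wf E) = 0) ∧
          Pf MSEuw = Pstar ∧ μf MSEuw = 0 ∧ wf MSEuw = (fun _ => 1 / (m : ℝ)) ∧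
          (∀ E ∈ Set.Ioc (MSEuw - δ) MSEuw,
            ∀ p : (Fin n → ℝ) × ℝ × (Fin m → ℝ), p ∈ U →
              Fmap m n B Q E p.1 p.2.1 p.2.2 = 0 → p = (Pf E, μf E, wf E)) := by
  classical
  have hm' : (m:ℝ) ≠ 0 := Nat.cast_ne_zero.mpr hm.ne'
  have hsum2 : ∑ i : Fin m, rstar i ^ 2 = (m:ℝ) * MSEuw := by rw [hM]; field_simp
  have hBtr : Bᵀ.mulVec rstar = 0 := by
    have h1 : (Bᵀ * B) * ((Bᵀ * B)⁻¹ * Bᵀ) = Bᵀ := by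
      rw [← Matrix.mul_assoc, Matrix.mul_nonsing_inv _ hB, Matrix.one_mul]
    rw [hr, hP, Matrix.mulVec_sub, Matrix.mulVec_mulVec, Matrix.mulVec_mulVec, h1, sub_self]
  set c : ℝ := (∑ i : Fin m, rstar i ^ 4) - MSEuw * ∑ i : Fin m, rstar i ^ 2 with hcdef
  have hvar : c = ∑ i : Fin m, (rstar i ^ 2 - MSEuw)^2 := by
    have h2 : ∑ i : Fin m, (rstar i ^ 2 - MSEuw)^2
        = ∑ i : Fin m, (rstar i ^ 4 - 2 * MSEuw * rstar i ^ 2 + MSEuw ^ 2) :=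
      Finset.sum_congr rfl fun i _ => by ring
    have h3 : ∑ i : Fin m, 2 * MSEuw * rstar i ^ 2 = 2 * MSEuw * ((m:ℝ) * MSEuw) := by
      rw [← Finset.mul_sum, hsum2]
    rw [hcdef, h2, Finset.sum_add_distrib, Finset.sum_sub_distrib, Finset.sum_const,
      Finset.card_univ, Fintype.card_fin, nsmul_eq_mul, h3]
    linear_combination (-(MSEuw)) * hsum2
  have hex : ∃ i : Fin m, rstar i ^ 2 ≠ MSEuw := by
    by_contra hall
    push_neg at hall
    apply hres
    intro i j
    have : rstar i ^ 2 = rstar j ^ 2 := by rw [hall i, hall j]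
    have := congrArg Real.sqrt this
    rwa [Real.sqrt_sq_eq_abs, Real.sqrt_sq_eq_abs] at this
  have hc : 0 < c := by
    obtain ⟨i0, hi0⟩ := hex
    rw [hvar]
    refine Finset.sum_pos' (fun i _ => sq_nonneg _) ⟨i0, Finset.mem_univ _, ?_⟩
    exact lt_of_le_of_ne (sq_nonneg _) (Ne.symm (pow_ne_zero 2 (sub_ne_zero.mpr hi0)))
  -- the derivative is a linear isomorphism
  have hDinj : Function.Injective (Dclm m n B rstar MSEuw c) :=
    Dclm_injective m n hm B hB rstar MSEuw c hc.ne'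
  have hDsurj : Function.Surjective (Dclm m n B rstar MSEuw c) :=
    LinearMap.surjective_of_injective (f := (Dclm m n B rstar MSEuw c).toLinearMap) hDinj
  have hbij : Function.Bijective (Dclm m n B rstar MSEuw c) := ⟨hDinj, hDsurj⟩
  let eqv : Ysp m n ≃L[ℝ] Ysp m n :=
    (LinearEquiv.ofBijective (Dclm m n B rstar MSEuw c).toLinearMap hbij).toContinuousLinearEquiv
  have heqv : (eqv : Ysp m n →L[ℝ] Ysp m n) = Dclm m n B rstar MSEuw c :=
    ContinuousLinearMap.ext fun v => rfl
  set a : Ysp m n := (MSEuw, (Pstar, 0, fun _ => 1/(m:ℝ))) with hadef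
  have hfd : HasFDerivAt (Gexp m n B Q) ((eqv : Ysp m n →L[ℝ] Ysp m n)) a := by
    rw [heqv]
    exact hasFDerivAt_Gexp m n hm B Q MSEuw Pstar rstar hr hM hBtr
  have hcd : ContDiffAt ℝ 1 (Gexp m n B Q) a := (smooth_Gexp m n hm B Q).contDiffAt
  have hra : ∀ i, B.mulVec Pstar i - Q i = rstar i := by
    intro i; rw [hr]; simp
  have hGa : Gexp m n B Q a = ((MSEuw, 0) : Ysp m n) := by
    have hF1 : (fun j => ∑ i : Fin m, B i j * ((1/(m:ℝ)) * (B.mulVec Pstar i - Q i)))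
        = (0 : Fin n → ℝ) := by
      funext j
      have h0 : ∑ i : Fin m, B i j * rstar i = 0 := by
        have := congrFun hBtr j
        simpa [Matrix.mulVec, dotProduct, transpose_apply, mul_comm] using this
      have : ∑ i : Fin m, B i j * ((1/(m:ℝ)) * (B.mulVec Pstar i - Q i))
          = (1/(m:ℝ)) * ∑ i : Fin m, B i j * rstar i := by
        rw [Finset.mul_sum]
        exact Finset.sum_congr rfl fun i _ => by rw [hra i]; ring
      rw [this, h0, mul_zero]
      rfl
    simp only [Gexp, hadef]
    refine Prod.ext rfl (Prod.ext ?_ (Prod.ext ?_ ?_))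
    · exact hF1
    · simp only [neg_zero, zero_mul, Real.exp_zero, one_mul, Finset.sum_const,
        Finset.card_univ, Fintype.card_fin, nsmul_eq_mul, mul_one, hra]
      rw [hsum2]
      simp [mul_comm]
    · funext k
      simp [hm']
  -- inverse function theorem setup
  have hsrc : a ∈ (hcd.toOpenPartialHomeomorph _ hfd one_ne_zero).source :=
    hcd.mem_toOpenPartialHomeomorph_source hfd one_ne_zero
  have htgt : ((MSEuw, 0) : Ysp m n) ∈ (hcd.toOpenPartialHomeomorph _ hfd one_ne_zero).target := by
    have := hcd.image_mem_toOpenPartialHomeomorph_target hfd one_ne_zero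
    rwa [hGa] at this
  have hinv_symm : hcd.localInverse hfd one_ne_zero = (hcd.toOpenPartialHomeomorph _ hfd one_ne_zero).symm := rfl
  have hinva : hcd.localInverse hfd one_ne_zero ((MSEuw, 0) : Ysp m n) = a := by
    have := hcd.localInverse_apply_image hfd one_ne_zero
    rwa [hGa] at this
  have hcdinv : ContDiffAt ℝ 1 (hcd.localInverse hfd one_ne_zero) ((MSEuw, 0) : Ysp m n) := by
    have := hcd.to_localInverse hfd one_ne_zero
    rwa [hGa] at this
  obtain ⟨V, hV, W, hW, hVW⟩ := mem_nhds_prod_iff.mp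
    ((hcd.toOpenPartialHomeomorph _ hfd one_ne_zero).open_source.mem_nhds hsrc)
  have hWx : W ∈ nhds ((Pstar, 0, fun _ => 1 / (m : ℝ)) : Xsp m n) := hW
  have hpre : (hcd.localInverse hfd one_ne_zero) ⁻¹' (V ×ˢ W) ∈ nhds ((MSEuw, 0) : Ysp m n) := by
    refine hcdinv.continuousAt.preimage_mem_nhds ?_
    rw [hinva]
    exact prod_mem_nhds hV hW
  have hsolcd : ContDiffAt ℝ 1 (fun E : ℝ => hcd.localInverse hfd one_ne_zero (E, 0)) MSEuw :=
    hcdinv.comp MSEuw (contDiffAt_id.prodMk contDiffAt_const)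
  obtain ⟨u, hu, hcdu⟩ := hsolcd.contDiffOn le_rfl (by simp)
  have htends : Filter.Tendsto (fun E : ℝ => ((E, 0) : Ysp m n)) (nhds MSEuw)
      (nhds ((MSEuw, 0) : Ysp m n)) :=
    (continuous_id.prodMk continuous_const).continuousAt
  have hNbig : {E : ℝ | ((E, 0) : Ysp m n) ∈ (hcd.toOpenPartialHomeomorph _ hfd one_ne_zero).target
      ∧ ((E, 0) : Ysp m n) ∈ (hcd.localInverse hfd one_ne_zero) ⁻¹' (V ×ˢ W)} ∈ nhds MSEuw := by
    have := htends (Filter.inter_mem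
      ((hcd.toOpenPartialHomeomorph _ hfd one_ne_zero).open_target.mem_nhds htgt) hpre)
    exact this
  obtain ⟨δ, hδpos, hball⟩ := Metric.mem_nhds_iff.mp
    (Filter.inter_mem (Filter.inter_mem hNbig hu) hV)
  have hIoc : Set.Ioc (MSEuw - δ) MSEuw ⊆ Metric.ball MSEuw δ := by
    intro E hE
    rw [Metric.mem_ball, Real.dist_eq, abs_sub_lt_iff]
    constructor <;> linarith [hE.1, hE.2]
  have hsub := Set.Subset.trans hIoc hball
  -- key facts for E in the interval
  have hkey : ∀ E ∈ Set.Ioc (MSEuw - δ) MSEuw,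
      ((E, 0) : Ysp m n) ∈ (hcd.toOpenPartialHomeomorph _ hfd one_ne_zero).target ∧
      hcd.localInverse hfd one_ne_zero (E, 0) ∈ V ×ˢ W ∧ E ∈ u ∧ E ∈ V := by
    intro E hE
    have h := hsub hE
    exact ⟨h.1.1.1, h.1.1.2, h.1.2, h.2⟩
  have hG_inv : ∀ E ∈ Set.Ioc (MSEuw - δ) MSEuw,
      Gexp m n B Q (hcd.localInverse hfd one_ne_zero (E, 0)) = (E, 0) := by
    intro E hE
    have h := (hcd.toOpenPartialHomeomorph _ hfd one_ne_zero).right_inv (hkey E hE).1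
    rw [← hinv_symm] at h
    exact h
  have hfst : ∀ E ∈ Set.Ioc (MSEuw - δ) MSEuw,
      (hcd.localInverse hfd one_ne_zero (E, 0)).1 = E := by
    intro E hE
    have h := hG_inv E hE
    rw [Gexp_eq] at h
    exact congrArg Prod.fst h
  refine ⟨δ, hδpos, W, hWx,
    (fun E => (hcd.localInverse hfd one_ne_zero (E, 0)).2.1),
    (fun E => (hcd.localInverse hfd one_ne_zero (E, 0)).2.2.1),
    (fun E => (hcd.localInverse hfd one_ne_zero (E, 0)).2.2.2), ?_, ?_, ?_, ?_, ?_, ?_⟩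
  · have heta : (fun E : ℝ => ((hcd.localInverse hfd one_ne_zero (E, 0)).2.1,
        (hcd.localInverse hfd one_ne_zero (E, 0)).2.2.1,
        (hcd.localInverse hfd one_ne_zero (E, 0)).2.2.2))
        = fun E : ℝ => (hcd.localInverse hfd one_ne_zero (E, 0)).2 := rfl
    rw [heta]
    exact contDiff_snd.comp_contDiffOn
      (hcdu.mono fun E hE => (hsub hE).1.2)
  · intro E hE
    constructor
    · exact ((hkey E hE).2.1).2
    · have h := hG_inv E hE
      rw [Gexp_eq] at h
      have h2 := congrArg Prod.snd h
      simp only at h2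
      rwa [hfst E hE] at h2
  · show (hcd.localInverse hfd one_ne_zero ((MSEuw, 0) : Ysp m n)).2.1 = Pstar
    rw [hinva]
  · show (hcd.localInverse hfd one_ne_zero ((MSEuw, 0) : Ysp m n)).2.2.1 = 0
    rw [hinva]
  · show (hcd.localInverse hfd one_ne_zero ((MSEuw, 0) : Ysp m n)).2.2.2 = fun _ => 1 / (m:ℝ)
    rw [hinva]
  · intro E hE p hpW hp0
    have hEV : E ∈ V := (hkey E hE).2.2.2
    have hq_src : ((E, p) : Ysp m n) ∈ (hcd.toOpenPartialHomeomorph _ hfd one_ne_zero).source :=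
      hVW (Set.mk_mem_prod hEV hpW)
    have hinv_src : hcd.localInverse hfd one_ne_zero (E, 0)
        ∈ (hcd.toOpenPartialHomeomorph _ hfd one_ne_zero).source := by
      rw [hinv_symm]
      exact (hcd.toOpenPartialHomeomorph _ hfd one_ne_zero).map_target (hkey E hE).1
    have hGq : Gexp m n B Q (E, p) = ((E, 0) : Ysp m n) := by
      rw [Gexp_eq]
      simp only
      rw [hp0]
    have hPHq : (hcd.toOpenPartialHomeomorph _ hfd one_ne_zero) (E, p)
        = (hcd.toOpenPartialHomeomorph _ hfd one_ne_zero) (hcd.localInverse hfd one_ne_zero (E, 0)) := by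
      rw [hcd.toOpenPartialHomeomorph_coe hfd one_ne_zero]
      rw [hGq, hG_inv E hE]
    have := (hcd.toOpenPartialHomeomorph _ hfd one_ne_zero).injOn hq_src hinv_src hPHq
    have hp : p = (hcd.localInverse hfd one_ne_zero (E, 0)).2 := congrArg Prod.snd this
    exact hp
end

section
/- Let m, n be positive integers, B an m×n real matrix with full column rank, Q ∈ ℝ^m, P* = (BᵀB)⁻¹BᵀQ, r* = BP* − Q, and MSEuw = (1/m)∑_{i=1}^m (r*_i)². Assume the entries of r* do not all have the same absolute value, and let E ↦ (P(E), μ(E), w(E)) be the continuously differentiable solution branch of F(P, μ, w; E) = 0 defined on (MSEuw − δ₀, MSEuw] with (P(MSEuw), μ(MSEuw), w(MSEuw)) = (P*, 0, (1/m, …, 1/m)). Then there exists δ > 0 such that for every E ∈ (MSEuw − δ, MSEuw), the Gauss–Seidel iteration matrix G = −L⁻¹U of the Jacobian J_F evaluated at (P(E), μ(E), w(E)) has spectral radius strictly less than 1. -/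
open Matrix Finset

/-- The block lower-triangular part `L = [[A, 0, 0], [dᵀ, s, 0], [D, v, I]]` of
the Jacobian `J_F` of `F` with respect to `(P, μ, w)`, where with `r = BP − Q`
and `σ = ∑ i, e^{−μ r_i²}`:
`A = Bᵀ diag(w) B`, `dᵀ = (2 r ⊙ ((1+μE)u − μ r²) ⊙ e^{−μ r²})ᵀ B`,
`s = ∑ i r_i² e^{−μ r_i²}(E − r_i²)`,
`D = (2μ/σ) diag(e^{−μ r²})((1/σ) diag(r) − u (r ⊙ e^{−μ r²})ᵀ) B`,
`v = σ⁻² diag(e^{−μ r²})(σ r² − (∑ i r_i² e^{−μ r_i²}) u)`. -/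
noncomputable def jacL (m n : ℕ) (B : Matrix (Fin m) (Fin n) ℝ) (Q : Fin m → ℝ)
    (E : ℝ) (P : Fin n → ℝ) (μ : ℝ) (w : Fin m → ℝ) :
    Matrix (Fin n ⊕ (Unit ⊕ Fin m)) (Fin n ⊕ (Unit ⊕ Fin m)) ℝ :=
  let r := B.mulVec P - Q
  let σ : ℝ := ∑ i : Fin m, Real.exp (-μ * (r i) ^ 2)
  let A := Bᵀ * Matrix.diagonal w * B
  let d : Fin n → ℝ :=
    Matrix.vecMul (fun i => 2 * r i * ((1 + μ * E) - μ * (r i) ^ 2)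
      * Real.exp (-μ * (r i) ^ 2)) B
  let s : ℝ := ∑ i : Fin m, (r i) ^ 2 * Real.exp (-μ * (r i) ^ 2) * (E - (r i) ^ 2)
  let D : Matrix (Fin m) (Fin n) ℝ :=
    (2 * μ / σ) • ((Matrix.diagonal fun i => Real.exp (-μ * (r i) ^ 2)) *
      ((1 / σ) • Matrix.diagonal r -
        Matrix.vecMulVec (fun _ => (1 : ℝ))
          (fun j => r j * Real.exp (-μ * (r j) ^ 2))) * B)
  let v : Fin m → ℝ := fun k => (1 / σ ^ 2) * Real.exp (-μ * (r k) ^ 2) *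
    (σ * (r k) ^ 2 - ∑ i : Fin m, (r i) ^ 2 * Real.exp (-μ * (r i) ^ 2))
  Matrix.fromBlocks A 0
    (Matrix.of fun i j => Sum.elim (fun _ : Unit => d j) (fun k => D k j) i)
    (Matrix.fromBlocks (Matrix.of fun _ _ => s) 0
      (Matrix.of fun k _ => v k) (1 : Matrix (Fin m) (Fin m) ℝ))

/-- The strictly block upper-triangular part `U = [[0, 0, C], [0, 0, 0], [0, 0, 0]]`
of the Jacobian `J_F`, where `C = Bᵀ diag(r)` with `r = BP − Q`. -/
noncomputable def jacU (m n : ℕ) (B : Matrix (Fin m) (Fin n) ℝ) (Q : Fin m → ℝ)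
    (P : Fin n → ℝ) :
    Matrix (Fin n ⊕ (Unit ⊕ Fin m)) (Fin n ⊕ (Unit ⊕ Fin m)) ℝ :=
  let r := B.mulVec P - Q
  let C := Bᵀ * Matrix.diagonal r
  Matrix.fromBlocks 0
    (Matrix.of fun i j => Sum.elim (fun _ : Unit => (0 : ℝ)) (fun k => C i k) j)
    0 0


section AuxContinuity

open Matrix

variable {m n : ℕ} (B : Matrix (Fin m) (Fin n) ℝ) (Q : Fin m → ℝ)

/-- The parameter space `(E, P, μ, w)`. -/
abbrev ZZ (m n : ℕ) := ℝ × (Fin n → ℝ) × ℝ × (Fin m → ℝ)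

lemma continuous_jacL (hm : 0 < m) :
    Continuous (fun z : ZZ m n => jacL m n B Q z.1 z.2.1 z.2.2.1 z.2.2.2) := by
  haveI : Nonempty (Fin m) := ⟨⟨0, hm⟩⟩
  have hP : Continuous fun z : ZZ m n => z.2.1 := continuous_fst.comp continuous_snd
  have hμ : Continuous fun z : ZZ m n => z.2.2.1 :=
    continuous_fst.comp (continuous_snd.comp continuous_snd)
  have hw : Continuous fun z : ZZ m n => z.2.2.2 :=
    continuous_snd.comp (continuous_snd.comp continuous_snd)
  have hE : Continuous fun z : ZZ m n => z.1 := continuous_fst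
  have hrv : Continuous fun z : ZZ m n => B.mulVec z.2.1 - Q :=
    (continuous_const.matrix_mulVec hP).sub continuous_const
  have hr : ∀ i, Continuous fun z : ZZ m n => (B.mulVec z.2.1 - Q) i :=
    fun i => (continuous_apply i).comp hrv
  have hexp : ∀ i, Continuous fun z : ZZ m n =>
      Real.exp (-z.2.2.1 * ((B.mulVec z.2.1 - Q) i) ^ 2) :=
    fun i => Real.continuous_exp.comp ((hμ.neg).mul ((hr i).pow 2))
  have hσ : Continuous fun z : ZZ m n =>
      ∑ i : Fin m, Real.exp (-z.2.2.1 * ((B.mulVec z.2.1 - Q) i) ^ 2) :=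
    continuous_finset_sum _ fun i _ => hexp i
  have hσpos : ∀ z : ZZ m n,
      0 < ∑ i : Fin m, Real.exp (-z.2.2.1 * ((B.mulVec z.2.1 - Q) i) ^ 2) :=
    fun z => Finset.sum_pos (fun i _ => Real.exp_pos _) Finset.univ_nonempty
  have hD : Continuous fun z : ZZ m n =>
      ((2 * z.2.2.1 / ∑ i : Fin m, Real.exp (-z.2.2.1 * ((B.mulVec z.2.1 - Q) i) ^ 2)) •
        ((Matrix.diagonal fun i => Real.exp (-z.2.2.1 * ((B.mulVec z.2.1 - Q) i) ^ 2)) *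
          ((1 / ∑ i : Fin m, Real.exp (-z.2.2.1 * ((B.mulVec z.2.1 - Q) i) ^ 2)) •
              Matrix.diagonal (B.mulVec z.2.1 - Q) -
            Matrix.vecMulVec (fun _ => (1 : ℝ))
              (fun j => (B.mulVec z.2.1 - Q) j *
                Real.exp (-z.2.2.1 * ((B.mulVec z.2.1 - Q) j) ^ 2))) * B)) := by
    refine Continuous.fun_smul ?_ ?_
    · exact ((continuous_const.mul hμ).div hσ fun z => (hσpos z).ne')
    · refine Continuous.matrix_mul (Continuous.matrix_mul ?_ ?_) continuous_const
      · exact (continuous_pi fun i => hexp i).matrix_diagonal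
      · refine Continuous.sub ?_ ?_
        · exact ((continuous_const.div hσ fun z => (hσpos z).ne').smul hrv.matrix_diagonal)
        · exact Continuous.matrix_vecMulVec continuous_const
            (continuous_pi fun j => (hr j).mul (hexp j))
  have hA : Continuous fun z : ZZ m n => Bᵀ * Matrix.diagonal z.2.2.2 * B :=
    (continuous_const.matrix_mul hw.matrix_diagonal).matrix_mul continuous_const
  have hd : Continuous fun z : ZZ m n =>
      Matrix.vecMul (fun i => 2 * (B.mulVec z.2.1 - Q) i *
        ((1 + z.2.2.1 * z.1) - z.2.2.1 * ((B.mulVec z.2.1 - Q) i) ^ 2)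
        * Real.exp (-z.2.2.1 * ((B.mulVec z.2.1 - Q) i) ^ 2)) B :=
    Continuous.matrix_vecMul (continuous_pi fun i =>
      (((continuous_const.mul (hr i)).mul
        ((continuous_const.add (hμ.mul hE)).sub (hμ.mul ((hr i).pow 2)))).mul (hexp i)))
      continuous_const
  apply continuous_matrix
  rintro (i | u | k) (j | u' | k')
  · show Continuous fun z : ZZ m n => (Bᵀ * Matrix.diagonal z.2.2.2 * B) i j
    exact hA.matrix_elem i j
  · exact continuous_const
  · exact continuous_const
  · show Continuous fun z : ZZ m n =>
      Matrix.vecMul (fun i => 2 * (B.mulVec z.2.1 - Q) i *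
        ((1 + z.2.2.1 * z.1) - z.2.2.1 * ((B.mulVec z.2.1 - Q) i) ^ 2)
        * Real.exp (-z.2.2.1 * ((B.mulVec z.2.1 - Q) i) ^ 2)) B j
    exact (continuous_apply j).comp hd
  · show Continuous fun z : ZZ m n =>
      ∑ i : Fin m, ((B.mulVec z.2.1 - Q) i) ^ 2 *
        Real.exp (-z.2.2.1 * ((B.mulVec z.2.1 - Q) i) ^ 2) *
        (z.1 - ((B.mulVec z.2.1 - Q) i) ^ 2)
    exact continuous_finset_sum _ fun i _ =>
      (((hr i).pow 2).mul (hexp i)).mul (hE.sub ((hr i).pow 2))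
  · exact continuous_const
  · show Continuous fun z : ZZ m n =>
      (((2 * z.2.2.1 / ∑ i : Fin m, Real.exp (-z.2.2.1 * ((B.mulVec z.2.1 - Q) i) ^ 2)) •
        ((Matrix.diagonal fun i => Real.exp (-z.2.2.1 * ((B.mulVec z.2.1 - Q) i) ^ 2)) *
          ((1 / ∑ i : Fin m, Real.exp (-z.2.2.1 * ((B.mulVec z.2.1 - Q) i) ^ 2)) •
              Matrix.diagonal (B.mulVec z.2.1 - Q) -
            Matrix.vecMulVec (fun _ => (1 : ℝ))
              (fun j => (B.mulVec z.2.1 - Q) j *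
                Real.exp (-z.2.2.1 * ((B.mulVec z.2.1 - Q) j) ^ 2))) * B)) :
        Matrix (Fin m) (Fin n) ℝ) k j
    exact hD.matrix_elem k j
  · show Continuous fun z : ZZ m n =>
      (1 / (∑ i : Fin m, Real.exp (-z.2.2.1 * ((B.mulVec z.2.1 - Q) i) ^ 2)) ^ 2) *
        Real.exp (-z.2.2.1 * ((B.mulVec z.2.1 - Q) k) ^ 2) *
        ((∑ i : Fin m, Real.exp (-z.2.2.1 * ((B.mulVec z.2.1 - Q) i) ^ 2)) *
          ((B.mulVec z.2.1 - Q) k) ^ 2 -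
          ∑ i : Fin m, ((B.mulVec z.2.1 - Q) i) ^ 2 *
            Real.exp (-z.2.2.1 * ((B.mulVec z.2.1 - Q) i) ^ 2))
    refine Continuous.mul (Continuous.mul ?_ (hexp k)) ?_
    · exact continuous_const.div (hσ.pow 2) fun z => (pow_ne_zero 2 (hσpos z).ne')
    · exact (hσ.mul ((hr k).pow 2)).sub
        (continuous_finset_sum _ fun i _ => ((hr i).pow 2).mul (hexp i))
  · exact continuous_const

lemma continuous_jacU :
    Continuous (fun z : ZZ m n => jacU m n B Q z.2.1) := by
  have hP : Continuous fun z : ZZ m n => z.2.1 := continuous_fst.comp continuous_snd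
  have hrv : Continuous fun z : ZZ m n => B.mulVec z.2.1 - Q :=
    (continuous_const.matrix_mulVec hP).sub continuous_const
  have hC : Continuous fun z : ZZ m n => Bᵀ * Matrix.diagonal (B.mulVec z.2.1 - Q) :=
    continuous_const.matrix_mul hrv.matrix_diagonal
  apply continuous_matrix
  rintro (i | u | k) (j | u' | k')
  · exact continuous_const
  · exact continuous_const
  · show Continuous fun z : ZZ m n => (Bᵀ * Matrix.diagonal (B.mulVec z.2.1 - Q)) i k'
    exact hC.matrix_elem i k'
  all_goals exact continuous_const

end AuxContinuity

attribute [local instance] Matrix.linftyOpNormedRing Matrix.linftyOpNormedAlgebra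

set_option maxHeartbeats 1600000 in
/-- Along the smooth solution branch of the maximum-entropy
system emanating from the ordinary least-squares point at `E = MSEuw`, there is
`δ > 0` such that for every `E ∈ (MSEuw − δ, MSEuw)` the Gauss–Seidel iteration
matrix `G = −L⁻¹U` of the Jacobian `J_F` evaluated at `(P(E), μ(E), w(E))` has
spectral radius strictly less than `1`. -/
theorem stmt_1 (m n : ℕ) (hm : 0 < m) (hn : 0 < n)
    (B : Matrix (Fin m) (Fin n) ℝ) (Q : Fin m → ℝ)
    (hB : IsUnit (Bᵀ * B).det)
    (Pstar : Fin n → ℝ) (hP : Pstar = ((Bᵀ * B)⁻¹ * Bᵀ).mulVec Q)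
    (rstar : Fin m → ℝ) (hr : rstar = B.mulVec Pstar - Q)
    (MSEuw : ℝ) (hM : MSEuw = (1 / (m : ℝ)) * ∑ i : Fin m, (rstar i) ^ 2)
    (hres : ¬ ∀ i j : Fin m, |rstar i| = |rstar j|)
    (δ₀ : ℝ) (hδ₀ : 0 < δ₀)
    (Pf : ℝ → Fin n → ℝ) (μf : ℝ → ℝ) (wf : ℝ → Fin m → ℝ)
    (hC1 : ContDiffOn ℝ 1 (fun E => (Pf E, μf E, wf E)) (Set.Ioc (MSEuw - δ₀) MSEuw))
    (hzero : ∀ E ∈ Set.Ioc (MSEuw - δ₀) MSEuw,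
      Fmap m n B Q E (Pf E) (μf E) (wf E) = 0)
    (hend : Pf MSEuw = Pstar ∧ μf MSEuw = 0 ∧ wf MSEuw = fun _ => 1 / (m : ℝ)) :
    ∃ δ > (0 : ℝ), ∀ E ∈ Set.Ioo (MSEuw - δ) MSEuw,
      spectralRadius ℂ
        ((-((jacL m n B Q E (Pf E) (μf E) (wf E))⁻¹
            * jacU m n B Q (Pf E))).map (algebraMap ℝ ℂ)) < 1  := by
  classical
  obtain ⟨hPend, hμend, hwend⟩ := hend
  have hx₀s : MSEuw ∈ Set.Ioc (MSEuw - δ₀) MSEuw := ⟨by linarith, le_rfl⟩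
  have hmR : (0 : ℝ) < (m : ℝ) := by exact_mod_cast hm
  -- normal equations : `Bᵀ rstar = 0`
  have hBr : Bᵀ.mulVec rstar = 0 := by
    rw [hr, hP, Matrix.mulVec_sub, Matrix.mulVec_mulVec, Matrix.mulVec_mulVec,
      Matrix.mul_nonsing_inv_cancel_left _ _ hB, sub_self]
  have hvm : ∀ j, ∑ i : Fin m, rstar i * B i j = 0 := by
    intro j
    have h2 := congrFun hBr j
    simpa [Matrix.mulVec, dotProduct, Matrix.transpose_apply, mul_comm] using h2
  -- strict Cauchy–Schwarz
  have key : (∑ i : Fin m, rstar i ^ 2) ^ 2 < (m : ℝ) * ∑ i : Fin m, (rstar i ^ 2) ^ 2 := by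
    push_neg at hres
    obtain ⟨i0, j0, hij⟩ := hres
    have haij : rstar i0 ^ 2 ≠ rstar j0 ^ 2 := by
      intro h; apply hij
      rw [← Real.sqrt_sq_eq_abs, ← Real.sqrt_sq_eq_abs, h]
    have hdd : 0 < ∑ i : Fin m, ∑ j : Fin m, (rstar i ^ 2 - rstar j ^ 2) ^ 2 := by
      refine Finset.sum_pos' (fun i _ => Finset.sum_nonneg fun j _ => sq_nonneg _) ?_
      refine ⟨i0, Finset.mem_univ _, Finset.sum_pos' (fun j _ => sq_nonneg _)
        ⟨j0, Finset.mem_univ _, ?_⟩⟩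
      have h0 : rstar i0 ^ 2 - rstar j0 ^ 2 ≠ 0 := sub_ne_zero_of_ne haij
      positivity
    have hid : ∑ i : Fin m, ∑ j : Fin m, (rstar i ^ 2 - rstar j ^ 2) ^ 2
        = 2 * ((m : ℝ) * ∑ i : Fin m, (rstar i ^ 2) ^ 2)
          - 2 * (∑ i : Fin m, rstar i ^ 2) ^ 2 := by
      have h1' : ∀ i j : Fin m, (rstar i ^ 2 - rstar j ^ 2) ^ 2
          = (rstar i ^ 2) ^ 2 - 2 * (rstar i ^ 2 * rstar j ^ 2) + (rstar j ^ 2) ^ 2 := by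
        intros; ring
      simp only [h1', Finset.sum_add_distrib, Finset.sum_sub_distrib, Finset.sum_const,
        Finset.card_univ, Fintype.card_fin, nsmul_eq_mul, ← Finset.mul_sum, ← Finset.sum_mul]
      ring
    linarith
  -- the scalar `s` at the endpoint is nonzero
  have hs₀ : (∑ i : Fin m, rstar i ^ 2 * (MSEuw - rstar i ^ 2)) ≠ 0 := by
    have hexp : (∑ i : Fin m, rstar i ^ 2 * (MSEuw - rstar i ^ 2))
        = MSEuw * (∑ i : Fin m, rstar i ^ 2) - ∑ i : Fin m, (rstar i ^ 2) ^ 2 := by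
      have h2 : ∀ i : Fin m, rstar i ^ 2 * (MSEuw - rstar i ^ 2)
          = MSEuw * rstar i ^ 2 - (rstar i ^ 2) ^ 2 := fun i => by ring
      simp only [h2, Finset.sum_sub_distrib, ← Finset.mul_sum]
    refine ne_of_lt ?_
    rw [hexp, hM]
    have hmm : ((1 : ℝ) / m) * (∑ i : Fin m, rstar i ^ 2) * (∑ i : Fin m, rstar i ^ 2)
        < ∑ i : Fin m, (rstar i ^ 2) ^ 2 := by
      rw [div_mul_eq_mul_div, div_mul_eq_mul_div, one_mul, div_lt_iff₀ hmR]
      calc (∑ i : Fin m, rstar i ^ 2) * (∑ i : Fin m, rstar i ^ 2)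
          = (∑ i : Fin m, rstar i ^ 2) ^ 2 := by ring
        _ < (m : ℝ) * ∑ i : Fin m, (rstar i ^ 2) ^ 2 := key
        _ = (∑ i : Fin m, (rstar i ^ 2) ^ 2) * m := by ring
    nlinarith
  -- endpoint residual
  have hrMS : B.mulVec (Pf MSEuw) - Q = rstar := by rw [hPend, ← hr]
  -- endpoint blocks
  set A₀ : Matrix (Fin n) (Fin n) ℝ := Bᵀ * Matrix.diagonal (fun _ : Fin m => 1 / (m : ℝ)) * B
    with hA₀def
  have hA₀eq : A₀ = (1 / (m : ℝ)) • (Bᵀ * B) := by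
    have hdiag : (Matrix.diagonal (fun _ : Fin m => 1 / (m : ℝ)))
        = (1 / (m : ℝ)) • (1 : Matrix (Fin m) (Fin m) ℝ) := by
      ext i j
      by_cases hij : i = j <;>
        simp [Matrix.diagonal_apply, hij, Matrix.one_apply, Matrix.smul_apply]
    rw [hA₀def, hdiag, Matrix.mul_smul, Matrix.mul_one, Matrix.smul_mul]
  have hdetA₀ : IsUnit A₀.det := by
    rw [hA₀eq, Matrix.det_smul]
    refine IsUnit.mul (IsUnit.pow _ ?_) hB
    exact isUnit_iff_ne_zero.mpr (one_div_ne_zero hmR.ne')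
  set C₀ : Matrix (Fin n) (Fin m) ℝ := Bᵀ * Matrix.diagonal rstar with hC₀def
  set Y₀ : Matrix (Fin n) (Unit ⊕ Fin m) ℝ :=
    Matrix.of fun i j => Sum.elim (fun _ : Unit => (0 : ℝ)) (fun k => (-(A₀⁻¹ * C₀)) i k) j
    with hY₀def
  set N₀ : Matrix (Fin n ⊕ (Unit ⊕ Fin m)) (Fin n ⊕ (Unit ⊕ Fin m)) ℝ :=
    Matrix.fromBlocks 0 Y₀ 0 0 with hN₀def
  set v₀ : Fin m → ℝ := fun k => (1 / (m : ℝ) ^ 2) *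
    ((m : ℝ) * rstar k ^ 2 - ∑ i : Fin m, rstar i ^ 2) with hv₀def
  set W₀ : Matrix (Unit ⊕ Fin m) (Unit ⊕ Fin m) ℝ :=
    Matrix.fromBlocks (Matrix.of fun _ _ => ∑ i : Fin m, rstar i ^ 2 * (MSEuw - rstar i ^ 2)) 0
      (Matrix.of fun k _ => v₀ k) 1 with hW₀def
  -- jacL at the endpoint
  have hri : ∀ i, (B *ᵥ Pf MSEuw) i - Q i = rstar i := fun i => by
    simpa using congrFun hrMS i
  have hL0 : jacL m n B Q MSEuw (Pf MSEuw) (μf MSEuw) (wf MSEuw)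
      = Matrix.fromBlocks A₀ 0 0 W₀ := by
    rw [hμend, hwend]
    ext i j
    rcases i with i | u | k <;> rcases j with j | u' | k'
    · simp [jacL, hrMS, hA₀def]
    · simp [jacL]
    · simp [jacL]
    · -- the `d` row vanishes
      show Matrix.vecMul (fun i => 2 * (B.mulVec (Pf MSEuw) - Q) i *
          ((1 + 0 * MSEuw) - 0 * ((B.mulVec (Pf MSEuw) - Q) i) ^ 2) *
          Real.exp (-0 * ((B.mulVec (Pf MSEuw) - Q) i) ^ 2)) B j
        = Matrix.fromBlocks A₀ 0 0 W₀ (Sum.inr (Sum.inl u)) (Sum.inl j)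
      rw [hrMS]
      simp only [Matrix.fromBlocks_apply₂₁, Matrix.zero_apply]
      simp only [Matrix.vecMul, dotProduct]
      calc ∑ i : Fin m, 2 * rstar i * ((1 + 0 * MSEuw) - 0 * rstar i ^ 2) *
            Real.exp (-0 * rstar i ^ 2) * B i j
          = 2 * ∑ i : Fin m, rstar i * B i j := by
            rw [Finset.mul_sum]
            refine Finset.sum_congr rfl fun i _ => ?_
            simp [Real.exp_zero]
            ring
        _ = 0 := by rw [hvm j, mul_zero]
    · -- `s` entry
      simp [jacL, hri, hW₀def]
    · simp [jacL, hW₀def]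
    · -- the `D` block vanishes
      simp [jacL, hrMS]
    · -- `v` entry
      simp [jacL, hri, hW₀def, hv₀def, Finset.card_univ, mul_comm]
    · simp [jacL, hW₀def]
  have hdetL0 : IsUnit (jacL m n B Q MSEuw (Pf MSEuw) (μf MSEuw) (wf MSEuw)).det := by
    rw [hL0, Matrix.det_fromBlocks_zero₁₂]
    refine hdetA₀.mul ?_
    have hdW : W₀.det = ∑ i : Fin m, rstar i ^ 2 * (MSEuw - rstar i ^ 2) := by
      rw [hW₀def, Matrix.det_fromBlocks_zero₁₂]
      simp [Matrix.det_unique]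
    rw [hdW]
    exact isUnit_iff_ne_zero.mpr hs₀
  -- jacU at the endpoint
  have hU0 : jacU m n B Q (Pf MSEuw)
      = Matrix.fromBlocks 0
          (Matrix.of fun i j => Sum.elim (fun _ : Unit => (0 : ℝ)) (fun k => C₀ i k) j) 0 0 := by
    ext i j
    rcases i with i | u | k <;> rcases j with j | u' | k' <;>
      simp [jacU, hrMS, hC₀def]
  have hAY : A₀ * Y₀
      = Matrix.of fun i j => Sum.elim (fun _ : Unit => (0 : ℝ)) (fun k => -(C₀ i k)) j := by
    have hcan := Matrix.mul_nonsing_inv_cancel_left A₀ C₀ hdetA₀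
    ext i j
    rcases j with u | k
    · simp [hY₀def, Matrix.mul_apply]
    · have h3 : (A₀ * (A₀⁻¹ * C₀)) i k = C₀ i k := by rw [hcan]
      simp only [Matrix.mul_apply] at h3
      simp only [Matrix.mul_apply, hY₀def, Matrix.of_apply, Sum.elim_inr, Matrix.neg_apply,
        mul_neg, Finset.sum_neg_distrib]
      rw [h3]
  have hLN : (Matrix.fromBlocks A₀ 0 0 W₀) * N₀ = -(jacU m n B Q (Pf MSEuw)) := by
    rw [hN₀def, Matrix.fromBlocks_multiply, hU0, hAY]
    ext i j
    rcases i with i | i <;> rcases j with j | j <;> try rcases j with j | j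
    all_goals simp [Matrix.fromBlocks, Matrix.neg_apply]
  -- the Gauss–Seidel matrix at the endpoint
  have hM0 : -((jacL m n B Q MSEuw (Pf MSEuw) (μf MSEuw) (wf MSEuw))⁻¹
      * jacU m n B Q (Pf MSEuw)) = N₀ := by
    have h2 : jacU m n B Q (Pf MSEuw)
        = (jacL m n B Q MSEuw (Pf MSEuw) (μf MSEuw) (wf MSEuw)) * (-N₀) := by
      rw [Matrix.mul_neg, hL0, hLN, neg_neg]
    rw [h2, Matrix.nonsing_inv_mul_cancel_left _ _ hdetL0, neg_neg]
  have hN₀sq : N₀ * N₀ = 0 := by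
    rw [hN₀def, Matrix.fromBlocks_multiply]
    simp
  -- continuity of the Gauss–Seidel matrix along the branch
  set G : ℝ → Matrix (Fin n ⊕ (Unit ⊕ Fin m)) (Fin n ⊕ (Unit ⊕ Fin m)) ℂ :=
    fun E => (-((jacL m n B Q E (Pf E) (μf E) (wf E))⁻¹
        * jacU m n B Q (Pf E))).map (algebraMap ℝ ℂ) with hGdef
  have hφ : ContinuousWithinAt (fun E => ((E, Pf E, μf E, wf E) : ZZ m n))
      (Set.Ioc (MSEuw - δ₀) MSEuw) MSEuw :=
    continuousWithinAt_id.prodMk (hC1.continuousOn MSEuw hx₀s)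
  have hLcw : ContinuousWithinAt (fun E => jacL m n B Q E (Pf E) (μf E) (wf E))
      (Set.Ioc (MSEuw - δ₀) MSEuw) MSEuw := by
    have h4 := (continuous_jacL B Q hm).continuousAt.comp_continuousWithinAt hφ
    simpa [Function.comp_def] using h4
  have hUcw : ContinuousWithinAt (fun E => jacU m n B Q (Pf E))
      (Set.Ioc (MSEuw - δ₀) MSEuw) MSEuw := by
    have h4 := (continuous_jacU B Q).continuousAt.comp_continuousWithinAt hφ
    simpa [Function.comp_def] using h4
  have hIcw : ContinuousWithinAt (fun E => (jacL m n B Q E (Pf E) (μf E) (wf E))⁻¹)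
      (Set.Ioc (MSEuw - δ₀) MSEuw) MSEuw := by
    have h4 : ContinuousAt Inv.inv (jacL m n B Q MSEuw (Pf MSEuw) (μf MSEuw) (wf MSEuw)) := by
      refine continuousAt_matrix_inv _ ?_
      rw [Ring.inverse_eq_inv']
      exact continuousAt_inv₀ (isUnit_iff_ne_zero.mp hdetL0)
    have h5 := ContinuousAt.comp_continuousWithinAt
      (f := fun E => jacL m n B Q E (Pf E) (μf E) (wf E)) (x := MSEuw) h4 hLcw
    simpa [Function.comp_def] using h5
  have hmulR : Continuous fun p : Matrix (Fin n ⊕ (Unit ⊕ Fin m)) (Fin n ⊕ (Unit ⊕ Fin m)) ℝ ×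
      Matrix (Fin n ⊕ (Unit ⊕ Fin m)) (Fin n ⊕ (Unit ⊕ Fin m)) ℝ => p.1 * p.2 :=
    continuous_fst.matrix_mul continuous_snd
  have hmapc : Continuous fun M : Matrix (Fin n ⊕ (Unit ⊕ Fin m)) (Fin n ⊕ (Unit ⊕ Fin m)) ℝ =>
      M.map (algebraMap ℝ ℂ) :=
    continuous_id.matrix_map (continuous_algebraMap ℝ ℂ)
  have hGcw : ContinuousWithinAt G (Set.Ioc (MSEuw - δ₀) MSEuw) MSEuw := by
    have h4 := hmulR.continuousAt.comp_continuousWithinAt (hIcw.prodMk hUcw)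
    have h5 : ContinuousWithinAt
        (fun E => (jacL m n B Q E (Pf E) (μf E) (wf E))⁻¹ * jacU m n B Q (Pf E))
        (Set.Ioc (MSEuw - δ₀) MSEuw) MSEuw := by
      simpa [Function.comp_def] using h4
    have h6 := hmapc.continuousAt.comp_continuousWithinAt h5.neg
    rw [hGdef]
    simpa [Function.comp_def] using h6
  have hmulC : Continuous fun p : Matrix (Fin n ⊕ (Unit ⊕ Fin m)) (Fin n ⊕ (Unit ⊕ Fin m)) ℂ ×
      Matrix (Fin n ⊕ (Unit ⊕ Fin m)) (Fin n ⊕ (Unit ⊕ Fin m)) ℂ => p.1 * p.2 :=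
    continuous_fst.matrix_mul continuous_snd
  have hG2cw : ContinuousWithinAt (fun E => G E * G E) (Set.Ioc (MSEuw - δ₀) MSEuw) MSEuw := by
    have h4 := hmulC.continuousAt.comp_continuousWithinAt (hGcw.prodMk hGcw)
    simpa [Function.comp_def] using h4
  have hG0 : G MSEuw * G MSEuw = 0 := by
    rw [hGdef]
    show ((-((jacL m n B Q MSEuw (Pf MSEuw) (μf MSEuw) (wf MSEuw))⁻¹
        * jacU m n B Q (Pf MSEuw))).map (algebraMap ℝ ℂ)) *
      ((-((jacL m n B Q MSEuw (Pf MSEuw) (μf MSEuw) (wf MSEuw))⁻¹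
        * jacU m n B Q (Pf MSEuw))).map (algebraMap ℝ ℂ)) = 0
    rw [hM0, ← Matrix.map_mul, hN₀sq, Matrix.map_zero _ (map_zero _)]
  -- eventually the square has norm `< 1`
  have h01 : Filter.Tendsto (fun E => G E * G E)
      (nhdsWithin MSEuw (Set.Ioc (MSEuw - δ₀) MSEuw)) (nhds 0) := by
    have h2 := hG2cw
    rwa [ContinuousWithinAt, hG0] at h2
  have hball : {E : ℝ | ‖G E * G E‖ < 1} ∈ nhdsWithin MSEuw (Set.Ioc (MSEuw - δ₀) MSEuw) := by
    have hb : Metric.ball (0 : Matrix (Fin n ⊕ (Unit ⊕ Fin m)) (Fin n ⊕ (Unit ⊕ Fin m)) ℂ) 1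
        ∈ nhds (0 : Matrix (Fin n ⊕ (Unit ⊕ Fin m)) (Fin n ⊕ (Unit ⊕ Fin m)) ℂ) :=
      Metric.ball_mem_nhds _ one_pos
    filter_upwards [h01 hb] with E hE using mem_ball_zero_iff.mp hE
  rw [Metric.mem_nhdsWithin_iff] at hball
  obtain ⟨ε, hε, hsub⟩ := hball
  refine ⟨min ε δ₀, lt_min hε hδ₀, ?_⟩
  intro E hE
  have hEball : E ∈ Metric.ball MSEuw ε := by
    rw [Metric.mem_ball, Real.dist_eq, abs_lt]
    have h5 := min_le_left ε δ₀
    constructor <;> [linarith [hE.1] ; linarith [hE.2]]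
  have hEs : E ∈ Set.Ioc (MSEuw - δ₀) MSEuw := by
    have h6 := min_le_right ε δ₀
    exact ⟨by linarith [hE.1], hE.2.le⟩
  have hlt : ‖G E * G E‖ < 1 := hsub ⟨hEball, hEs⟩
  -- conclude via the spectral radius power bound
  haveI : CompleteSpace (Matrix (Fin n ⊕ (Unit ⊕ Fin m)) (Fin n ⊕ (Unit ⊕ Fin m)) ℂ) :=
    FiniteDimensional.complete ℂ _
  have hb := spectrum.spectralRadius_le_pow_nnnorm_pow_one_div ℂ (G E) 1
  have hpow : (G E) ^ (1 + 1) = G E * G E := by rw [pow_succ, pow_one]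
  rw [hpow, nnnorm_one, ENNReal.coe_one, ENNReal.one_rpow, mul_one] at hb
  have hfinal : (‖G E * G E‖₊ : ENNReal) ^ (1 / ((1 : ℕ) + 1) : ℝ) < 1 := by
    refine ENNReal.rpow_lt_one ?_ (by norm_num)
    rw [ENNReal.coe_lt_one_iff]
    exact_mod_cast hlt
  calc spectralRadius ℂ ((-((jacL m n B Q E (Pf E) (μf E) (wf E))⁻¹
        * jacU m n B Q (Pf E))).map (algebraMap ℝ ℂ))
      = spectralRadius ℂ (G E) := by rw [hGdef]
    _ ≤ _ := hb
    _ < 1 := hfinal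
end
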